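/- For any w > 0, every M > −1/4 is a regular value of h_w(x,y) = y/√(1+w²x²) + x² + y², i.e. the gradient of h_w is nonzero at every point of h_w⁻¹(M). -/

import Mathlib

open Real

set_option maxHeartbeats 1600000 in
/-- Every `M > −1/4` is a regular value of `h_w`: the differential of `h_w` is
nonzero at every point of the level set `h_w⁻¹(M)`. -/
theorem hw_regular_value (w M : ℝ) (hw : 0 < w) (hM : -(1 / 4) < M) :
    ∀ p : ℝ × ℝ,
      p.2 / Real.sqrt (1 + w ^ 2 * p.1 ^ 2) + p.1 ^ 2 + p.2 ^ 2 = M →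
      fderiv ℝ (fun q : ℝ × ℝ =>
        q.2 / Real.sqrt (1 + w ^ 2 * q.1 ^ 2) + q.1 ^ 2 + q.2 ^ 2) p ≠ 0 := by
  rintro ⟨x, y⟩ hp hF
  set f : ℝ × ℝ → ℝ := fun q : ℝ × ℝ =>
      q.2 / Real.sqrt (1 + w ^ 2 * q.1 ^ 2) + q.1 ^ 2 + q.2 ^ 2 with hf
  dsimp only at hp
  set s : ℝ := Real.sqrt (1 + w ^ 2 * x ^ 2) with hsdef
  have hpos : (0:ℝ) < 1 + w ^ 2 * x ^ 2 := by positivity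
  have hs0 : 0 < s := Real.sqrt_pos.mpr hpos
  have hsne : s ≠ 0 := hs0.ne'
  have hs2 : s ^ 2 = 1 + w ^ 2 * x ^ 2 := Real.sq_sqrt hpos.le
  clear_value s
  have hsne2 : Real.sqrt (1 + w ^ 2 * x ^ 2) ≠ 0 := by rw [← hsdef]; exact hsne
  -- differentiability
  have hinner : DifferentiableAt ℝ (fun q : ℝ × ℝ => 1 + w ^ 2 * q.1 ^ 2) (x, y) := by
    fun_prop
  have hsqrt : DifferentiableAt ℝ (fun q : ℝ × ℝ => Real.sqrt (1 + w ^ 2 * q.1 ^ 2)) (x, y) :=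
    hinner.sqrt hpos.ne'
  have hdiff : DifferentiableAt ℝ f (x, y) := by
    rw [hf]
    simp only [div_eq_mul_inv]
    refine DifferentiableAt.add (DifferentiableAt.add ?_ ?_) ?_
    · exact (differentiableAt_snd : DifferentiableAt ℝ (fun q : ℝ × ℝ => q.2) (x, y)).mul
        (hsqrt.inv hsne2)
    · exact (differentiableAt_fst : DifferentiableAt ℝ (fun q : ℝ × ℝ => q.1) (x, y)).pow 2
    · exact (differentiableAt_snd : DifferentiableAt ℝ (fun q : ℝ × ℝ => q.2) (x, y)).pow 2
  -- directional derivative machinery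
  have hdir : ∀ v : ℝ × ℝ, HasDerivAt (fun t : ℝ => f ((x, y) + t • v))
      (fderiv ℝ f (x, y) v) 0 := by
    intro v
    have hline : HasDerivAt (fun t : ℝ => (x, y) + t • v) v 0 := by
      have := ((hasDerivAt_id (0:ℝ)).smul_const v).const_add ((x, y) : ℝ × ℝ)
      simpa using this
    have hfd : HasFDerivAt f (fderiv ℝ f (x, y)) ((x, y) + (0:ℝ) • v) := by
      simpa using hdiff.hasFDerivAt
    have := hfd.comp_hasDerivAt 0 hline
    exact this
  -- vertical direction
  have hA : 1 / s + 2 * y = 0 := by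
    have h1 : HasDerivAt (fun t : ℝ => y + t) 1 0 := (hasDerivAt_id 0).const_add y
    have h2 : HasDerivAt (fun t : ℝ => (y + t) / s + x ^ 2 + (y + t) ^ 2)
        (1 / s + 2 * (y + 0) ^ 1 * 1) 0 := by
      have := ((h1.div_const s).add_const (x ^ 2)).add (h1.pow 2)
      refine this.congr_deriv ?_
      norm_num
    have heq : (fun t : ℝ => f ((x, y) + t • ((0:ℝ), (1:ℝ)))) =
        fun t : ℝ => (y + t) / s + x ^ 2 + (y + t) ^ 2 := by
      funext t
      simp [hf, Prod.smul_mk, smul_eq_mul, ← hsdef]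
    have h3 := hdir ((0:ℝ), (1:ℝ))
    rw [heq] at h3
    have h4 : fderiv ℝ f (x, y) ((0:ℝ), (1:ℝ)) = 1 / s + 2 * (y + 0) ^ 1 * 1 :=
      h3.unique h2
    rw [hF] at h4
    simp only [ContinuousLinearMap.zero_apply] at h4
    linear_combination -h4
  have hyneg : y < 0 := by
    have h1 : 0 < 1 / s := by positivity
    linarith
  -- horizontal direction
  have hx : x = 0 := by
    have hu : HasDerivAt (fun t : ℝ => 1 + w ^ 2 * (x + t) ^ 2) (w ^ 2 * (2 * x)) 0 := by
      have h1 : HasDerivAt (fun t : ℝ => x + t) 1 0 := (hasDerivAt_id 0).const_add x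
      have := ((h1.pow 2).const_mul (w ^ 2)).const_add 1
      simpa using this
    have hus : (1 + w ^ 2 * (x + (0:ℝ)) ^ 2) = 1 + w ^ 2 * x ^ 2 := by ring
    have hsq : HasDerivAt Real.sqrt (1 / (2 * s)) (1 + w ^ 2 * (x + (0:ℝ)) ^ 2) := by
      rw [hus, hsdef]
      exact Real.hasDerivAt_sqrt hpos.ne'
    have hv : HasDerivAt (fun t : ℝ => Real.sqrt (1 + w ^ 2 * (x + t) ^ 2))
        (1 / (2 * s) * (w ^ 2 * (2 * x))) 0 := by
      have := hsq.comp 0 hu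
      exact this
    have hvne : Real.sqrt (1 + w ^ 2 * (x + (0:ℝ)) ^ 2) ≠ 0 := by
      rw [hus, hsdef] at *
      exact hsne
    have hc : HasDerivAt (fun _ : ℝ => y) 0 0 := hasDerivAt_const 0 y
    have hx1 : HasDerivAt (fun t : ℝ => x + t) 1 0 := (hasDerivAt_id 0).const_add x
    have h2 := ((hc.div hv hvne).add (hx1.pow 2)).add_const (y ^ 2)
    have heq : (fun t : ℝ => f ((x, y) + t • ((1:ℝ), (0:ℝ)))) =
        fun t : ℝ => y / Real.sqrt (1 + w ^ 2 * (x + t) ^ 2) + (x + t) ^ 2 + y ^ 2 := by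
      funext t
      simp [hf, Prod.smul_mk, smul_eq_mul]
    have h3 := hdir ((1:ℝ), (0:ℝ))
    rw [heq] at h3
    have h4 := h3.unique h2
    rw [hF] at h4
    simp only [ContinuousLinearMap.zero_apply, id_eq] at h4
    rw [hus] at h4
    rw [← hsdef] at h4
    -- h4 : 0 = (0 * s - y * (1/(2*s) * (w^2*(2*x)))) / s^2 + 2*(x + 0)^(2-1)*1
    have hkey : x * (2 * s ^ 3 - y * w ^ 2) = 0 := by
      field_simp at h4
      norm_num at h4
      nlinarith [h4, hs0, sq_nonneg s]
    have hpos' : 0 < 2 * s ^ 3 - y * w ^ 2 := by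
      have hw2 : 0 < w ^ 2 := by positivity
      nlinarith [pow_pos hs0 3, mul_pos (neg_pos.mpr hyneg) hw2]
    rcases mul_eq_zero.mp hkey with h | h
    · exact h
    · linarith
  clear hdiff hdir hF hsqrt hinner hf f
  have hs1 : s = 1 := by
    have h1 : s ^ 2 = 1 := by rw [hs2, hx]; ring
    nlinarith [hs0, h1]
  have hy : y = -(1/2) := by
    rw [hs1] at hA; linarith
  rw [hx, hy, hs1] at hp
  norm_num at hp
  linarith
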